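/- Let (Σ, Γ) be a relative simplicial complex on a finite vertex set V (Γ ⊆ Σ are simplicial complexes), let Ψ = Σ∖Γ be its set of faces, and let ρ : V → {1,…,n−1} be a proper coloring of the 1-skeleton of Σ such that every maximal face of Ψ has exactly n−1 vertices whose colors are precisely {1,…,n−1}. Suppose F_1, …, F_k is a shelling order of the maximal faces of Ψ: for each i, the set Ψ_i∖Ψ_{i−1} has a unique minimal element R(F_i) under inclusion, where Ψ_i = {σ ∈ Ψ : σ ⊆ F_j for some j ≤ i}. Then F(Σ, Γ, ρ) = Σ_{σ ∈ Ψ} M_{ρ(σ), n} = Σ_{i=1}^{k} F_{ρ(R(F_i)), n}, where ρ(σ) = {ρ(x) : x ∈ σ}. -/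

import Mathlib

open Finset

/-- The fundamental quasisymmetric function `F_{S,n}`: sum of `x_{i₁} ⋯ x_{iₙ}` over
weakly increasing sequences `i₁ ≤ ⋯ ≤ iₙ` of positive integers with a strict
increase `i_j < i_{j+1}` whenever `j ∈ S`. -/
noncomputable def fundQSym (S : Finset ℕ) (n : ℕ) : MvPowerSeries ℕ+ ℤ :=
  fun d => (Nat.card {w : Fin n → ℕ+ //
    (∀ j k : Fin n, j ≤ k → w j ≤ w k) ∧
    (∀ k : ℕ, ∀ hk : k + 1 < n, (k + 1) ∈ S →
      w ⟨k, Nat.lt_of_succ_lt hk⟩ < w ⟨k + 1, hk⟩) ∧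
    ∀ q : ℕ+, d q = (Finset.univ.filter fun j => w j = q).card} : ℤ)

/-- The monomial quasisymmetric function `M_{S,n}`: sum of `x_{i₁} ⋯ x_{iₙ}` over
weakly increasing sequences whose set of strict ascents is exactly `S`. -/
noncomputable def monoQSym (S : Finset ℕ) (n : ℕ) : MvPowerSeries ℕ+ ℤ :=
  fun d => (Nat.card {w : Fin n → ℕ+ //
    (∀ j k : Fin n, j ≤ k → w j ≤ w k) ∧
    (∀ k : ℕ, ∀ hk : k + 1 < n,
      (w ⟨k, Nat.lt_of_succ_lt hk⟩ < w ⟨k + 1, hk⟩ ↔ (k + 1) ∈ S)) ∧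
    ∀ q : ℕ+, d q = (Finset.univ.filter fun j => w j = q).card} : ℤ)

open scoped Classical

lemma count_ofFn {n : ℕ} (w : Fin n → ℕ+) (a : ℕ+) :
    List.count a (List.ofFn w) = (Finset.univ.filter fun j => w j = a).card := by
  rw [List.ofFn_eq_map, List.count_eq_countP, List.countP_map,
    Finset.card_filter, Fin.sum_univ_def]
  induction List.finRange n with
  | nil => simp
  | cons x l ih =>
    by_cases h : w x = a <;>
      simp [List.countP_cons, h, ih, Function.comp, Nat.add_comm]

lemma mono_unique {n : ℕ} {w w' : Fin n → ℕ+}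
    (hw : ∀ j k : Fin n, j ≤ k → w j ≤ w k) (hw' : ∀ j k : Fin n, j ≤ k → w' j ≤ w' k)
    (h : ∀ q : ℕ+, (Finset.univ.filter fun j => w j = q).card
      = (Finset.univ.filter fun j => w' j = q).card) : w = w' := by
  apply List.ofFn_injective
  refine List.Perm.eq_of_sortedLE
    (List.sortedLE_ofFn_iff.2 fun i j hij => hw i j hij)
    (List.sortedLE_ofFn_iff.2 fun i j hij => hw' i j hij) (List.perm_iff_count.2 fun a => ?_)
  rw [count_ofFn, count_ofFn, h]

/-- the ascent set of a word -/
noncomputable def ascSet {n : ℕ} (w : Fin n → ℕ+) : Finset ℕ :=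
  ((Finset.range n).filter fun m => ∃ h : m + 1 < n,
     w ⟨m, Nat.lt_of_succ_lt h⟩ < w ⟨m + 1, h⟩).image (· + 1)

lemma mem_ascSet {n : ℕ} (w : Fin n → ℕ+) (m : ℕ) :
    m + 1 ∈ ascSet w ↔ ∃ h : m + 1 < n,
      w ⟨m, Nat.lt_of_succ_lt h⟩ < w ⟨m + 1, h⟩ := by
  simp only [ascSet, Finset.mem_image, Finset.mem_filter, Finset.mem_range]
  constructor
  · rintro ⟨m', ⟨_, h⟩, hm⟩
    obtain rfl : m' = m := by omega
    exact h
  · rintro ⟨h, hlt⟩; exact ⟨m, ⟨Nat.lt_of_succ_lt h, h, hlt⟩, rfl⟩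

lemma ascSet_subset {n : ℕ} (w : Fin n → ℕ+) : ascSet w ⊆ Finset.Icc 1 (n - 1) := by
  intro x hx
  simp only [ascSet, Finset.mem_image, Finset.mem_filter, Finset.mem_range] at hx
  obtain ⟨m, ⟨_, h, _⟩, rfl⟩ := hx
  exact Finset.mem_Icc.2 ⟨Nat.le_add_left 1 m, by omega⟩

/-- generic: Nat.card of the constrained-word subtype with a middle condition -/
lemma card_char {n : ℕ} {d : ℕ+ →₀ ℕ} {w : Fin n → ℕ+}
    (hwm : ∀ j k : Fin n, j ≤ k → w j ≤ w k)
    (hwc : ∀ q : ℕ+, d q = (Finset.univ.filter fun j => w j = q).card)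
    (C : (Fin n → ℕ+) → Prop) :
    Nat.card {w' : Fin n → ℕ+ //
      (∀ j k : Fin n, j ≤ k → w' j ≤ w' k) ∧ C w' ∧
      ∀ q : ℕ+, d q = (Finset.univ.filter fun j => w' j = q).card}
      = if C w then 1 else 0 := by
  have huniq : ∀ w' : Fin n → ℕ+, (∀ j k : Fin n, j ≤ k → w' j ≤ w' k) →
      (∀ q : ℕ+, d q = (Finset.univ.filter fun j => w' j = q).card) → w' = w := by
    intro w' h1 h2
    exact mono_unique h1 hwm fun q => (h2 q).symm.trans (hwc q)
  split_ifs with hC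
  · have : Subsingleton {w' : Fin n → ℕ+ //
        (∀ j k : Fin n, j ≤ k → w' j ≤ w' k) ∧ C w' ∧
        ∀ q : ℕ+, d q = (Finset.univ.filter fun j => w' j = q).card} := by
      constructor
      rintro ⟨a, ha1, _, ha3⟩ ⟨b, hb1, _, hb3⟩
      simp only [Subtype.mk_eq_mk]
      exact (huniq a ha1 ha3).trans (huniq b hb1 hb3).symm
    have : Nonempty {w' : Fin n → ℕ+ //
        (∀ j k : Fin n, j ≤ k → w' j ≤ w' k) ∧ C w' ∧
        ∀ q : ℕ+, d q = (Finset.univ.filter fun j => w' j = q).card} :=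
      ⟨⟨w, hwm, hC, hwc⟩⟩
    exact Nat.card_unique
  · have : IsEmpty {w' : Fin n → ℕ+ //
        (∀ j k : Fin n, j ≤ k → w' j ≤ w' k) ∧ C w' ∧
        ∀ q : ℕ+, d q = (Finset.univ.filter fun j => w' j = q).card} := by
      constructor
      rintro ⟨a, ha1, ha2, ha3⟩
      exact hC ((huniq a ha1 ha3) ▸ ha2)
    exact Nat.card_of_isEmpty

lemma card_empty_char {n : ℕ} {d : ℕ+ →₀ ℕ}
    (hne : ¬ ∃ w : Fin n → ℕ+, (∀ j k : Fin n, j ≤ k → w j ≤ w k) ∧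
      ∀ q : ℕ+, d q = (Finset.univ.filter fun j => w j = q).card)
    (C : (Fin n → ℕ+) → Prop) :
    Nat.card {w' : Fin n → ℕ+ //
      (∀ j k : Fin n, j ≤ k → w' j ≤ w' k) ∧ C w' ∧
      ∀ q : ℕ+, d q = (Finset.univ.filter fun j => w' j = q).card} = 0 := by
  have : IsEmpty {w' : Fin n → ℕ+ //
      (∀ j k : Fin n, j ≤ k → w' j ≤ w' k) ∧ C w' ∧
      ∀ q : ℕ+, d q = (Finset.univ.filter fun j => w' j = q).card} := by
    constructor; rintro ⟨a, ha1, _, ha3⟩; exact hne ⟨a, ha1, ha3⟩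
  exact Nat.card_of_isEmpty

lemma fund_eq_sum_mono (S : Finset ℕ) (n : ℕ) (hS : S ⊆ Finset.Icc 1 (n - 1)) :
    fundQSym S n =
      ∑ T ∈ (Finset.Icc 1 (n - 1)).powerset.filter (fun T => S ⊆ T), monoQSym T n := by
  funext d
  rw [show (∑ T ∈ (Finset.Icc 1 (n - 1)).powerset.filter (fun T => S ⊆ T), monoQSym T n) d
      = ∑ T ∈ (Finset.Icc 1 (n - 1)).powerset.filter (fun T => S ⊆ T), monoQSym T n d from
    by have := map_sum (MvPowerSeries.coeff (R := ℤ) d) (fun T => monoQSym T n)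
         ((Finset.Icc 1 (n - 1)).powerset.filter (fun T => S ⊆ T)); exact this]
  by_cases hex : ∃ w : Fin n → ℕ+, (∀ j k : Fin n, j ≤ k → w j ≤ w k) ∧
      ∀ q : ℕ+, d q = (Finset.univ.filter fun j => w j = q).card
  · obtain ⟨w, hwm, hwc⟩ := hex
    have hfund : fundQSym S n d = if S ⊆ ascSet w then 1 else 0 := by
      rw [show fundQSym S n d = (Nat.card _ : ℤ) from rfl, card_char hwm hwc,
        Nat.cast_ite, Nat.cast_one, Nat.cast_zero]
      refine if_congr ?_ rfl rfl
      constructor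
      · intro h s hs
        have hsI := Finset.mem_Icc.1 (hS hs)
        obtain ⟨m, rfl⟩ : ∃ m, s = m + 1 := ⟨s - 1, by omega⟩
        have hlt : m + 1 < n := by omega
        exact (mem_ascSet w m).2 ⟨hlt, h m hlt hs⟩
      · intro h k hk hkS
        exact ((mem_ascSet w k).1 (h hkS)).2
    have hmono : ∀ T ∈ (Finset.Icc 1 (n - 1)).powerset.filter (fun T => S ⊆ T),
        monoQSym T n d = if T = ascSet w then 1 else 0 := by
      intro T hT
      rw [Finset.mem_filter, Finset.mem_powerset] at hT
      rw [show monoQSym T n d = (Nat.card _ : ℤ) from rfl, card_char hwm hwc,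
        Nat.cast_ite, Nat.cast_one, Nat.cast_zero]
      refine if_congr ?_ rfl rfl
      constructor
      · intro h
        ext x
        constructor
        · intro hx
          have hxI := Finset.mem_Icc.1 (hT.1 hx)
          obtain ⟨m, rfl⟩ : ∃ m, x = m + 1 := ⟨x - 1, by omega⟩
          have hlt : m + 1 < n := by omega
          exact (mem_ascSet w m).2 ⟨hlt, (h m hlt).2 hx⟩
        · intro hx
          have hxI := Finset.mem_Icc.1 (ascSet_subset w hx)
          obtain ⟨m, rfl⟩ : ∃ m, x = m + 1 := ⟨x - 1, by omega⟩
          obtain ⟨hlt, hasc⟩ := (mem_ascSet w m).1 hx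
          exact (h m hlt).1 hasc
      · rintro rfl
        intro k hk
        exact ⟨fun h => (mem_ascSet w k).2 ⟨hk, h⟩, fun h => ((mem_ascSet w k).1 h).2⟩
    rw [Finset.sum_congr rfl hmono, Finset.sum_ite_eq' _ (ascSet w) (fun _ => (1 : ℤ)),
      hfund]
    refine if_congr ?_ rfl rfl
    simp only [Finset.mem_filter, Finset.mem_powerset]
    exact ⟨fun h => ⟨ascSet_subset w, h⟩, fun h => h.2⟩
  · rw [show fundQSym S n d = (Nat.card _ : ℤ) from rfl, card_empty_char hex]
    rw [Finset.sum_congr rfl (fun T _ => show monoQSym T n d = 0 by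
      rw [show monoQSym T n d = (Nat.card _ : ℤ) from rfl, card_empty_char hex]
      norm_num)]
    simp

open scoped Classical in
theorem stmt16 {V : Type*} [Fintype V] [DecidableEq V]
    (Sig Gam : Set (Finset V)) (n k : ℕ) (ρ : V → ℕ)
    (hSig : ∀ s ∈ Sig, ∀ t ⊆ s, t ∈ Sig)
    (hGam : ∀ s ∈ Gam, ∀ t ⊆ s, t ∈ Gam)
    (hsub : Gam ⊆ Sig)
    (hρrange : ∀ v : V, ρ v ∈ Finset.Icc 1 (n - 1))
    (hproper : ∀ u v : V, ({u, v} : Finset V) ∈ Sig → u ≠ v → ρ u ≠ ρ v)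
    (hbal : ∀ F ∈ Sig \ Gam, (∀ G ∈ Sig \ Gam, F ⊆ G → F = G) →
      F.card = n - 1 ∧ F.image ρ = Finset.Icc 1 (n - 1))
    (F : Fin k → Finset V)
    (hFfacet : ∀ i : Fin k, F i ∈ Sig \ Gam ∧ ∀ G ∈ Sig \ Gam, F i ⊆ G → F i = G)
    (hFinj : Function.Injective F)
    (hFall : ∀ G ∈ Sig \ Gam, (∀ G' ∈ Sig \ Gam, G ⊆ G' → G = G') → ∃ i : Fin k, F i = G)
    (R : Fin k → Finset V)
    (hshelling : ∀ i : Fin k,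
      (R i ∈ Sig \ Gam ∧ R i ⊆ F i ∧ ∀ j : Fin k, j < i → ¬R i ⊆ F j) ∧
      ∀ τ ∈ Sig \ Gam, τ ⊆ F i → (∀ j : Fin k, j < i → ¬τ ⊆ F j) → R i ⊆ τ) :
    (∑ σ ∈ Finset.univ.filter (fun σ : Finset V => σ ∈ Sig \ Gam),
        monoQSym (σ.image ρ) n) =
      ∑ i : Fin k, fundQSym ((R i).image ρ) n := by
  have hΨ : ∀ i : Fin k, ∀ σ ∈ Finset.Icc (R i) (F i), σ ∈ Sig \ Gam := by
    intro i σ hσ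
    rw [Finset.mem_Icc] at hσ
    refine ⟨hSig (F i) (hFfacet i).1.1 σ hσ.2, fun hσG => ?_⟩
    exact ((hshelling i).1.1).2 (hGam σ hσG (R i) hσ.1)
  have hexu : ∀ σ ∈ Sig \ Gam, ∃! i : Fin k, σ ∈ Finset.Icc (R i) (F i) := by
    intro σ hσ
    obtain ⟨G, hGs, hGmax⟩ := Set.Finite.exists_maximalFor id
      {G : Finset V | G ∈ Sig ∧ G ∉ Gam ∧ σ ⊆ G} (Set.toFinite _)
      ⟨σ, hσ.1, hσ.2, subset_rfl⟩
    have hGΨ : G ∈ Sig \ Gam := ⟨hGs.1, hGs.2.1⟩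
    have hGmax' : ∀ G' ∈ Sig \ Gam, G ⊆ G' → G = G' := fun G' hG' hsub' =>
      hsub'.antisymm (hGmax ⟨hG'.1, hG'.2, hGs.2.2.trans hsub'⟩ hsub')
    obtain ⟨i₀, hi₀⟩ := hFall G hGΨ hGmax'
    have hA : (Finset.univ.filter (fun j : Fin k => σ ⊆ F j)).Nonempty :=
      ⟨i₀, Finset.mem_filter.2 ⟨Finset.mem_univ _, hi₀ ▸ hGs.2.2⟩⟩
    set i := (Finset.univ.filter (fun j : Fin k => σ ⊆ F j)).min' hA with hidef
    have hiF : σ ⊆ F i := (Finset.mem_filter.1 (Finset.min'_mem _ hA)).2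
    have hmin : ∀ j : Fin k, j < i → ¬ σ ⊆ F j := fun j hj hjsub =>
      absurd (Finset.min'_le _ j (Finset.mem_filter.2 ⟨Finset.mem_univ _, hjsub⟩))
        (not_le.2 hj)
    have hRi : R i ⊆ σ := (hshelling i).2 σ hσ hiF hmin
    refine ⟨i, Finset.mem_Icc.2 ⟨hRi, hiF⟩, fun j hj => ?_⟩
    simp only [Finset.mem_Icc] at hj
    by_contra hne
    rcases lt_or_gt_of_ne hne with h | h
    · exact (hshelling i).1.2.2 j h (hRi.trans hj.2)
    · exact (hshelling j).1.2.2 i h (hj.1.trans hiF)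
  have hpart : Finset.univ.filter (fun σ : Finset V => σ ∈ Sig \ Gam)
      = Finset.univ.biUnion (fun i : Fin k => Finset.Icc (R i) (F i)) := by
    ext σ
    rw [Finset.mem_filter, Finset.mem_biUnion]
    constructor
    · intro h
      obtain ⟨i, hi, _⟩ := hexu σ h.2
      exact ⟨i, Finset.mem_univ _, hi⟩
    · rintro ⟨i, _, hi⟩
      exact ⟨Finset.mem_univ _, hΨ i σ hi⟩
  rw [hpart, Finset.sum_biUnion (fun i _ j _ hij => Finset.disjoint_left.2
    fun σ hσi hσj => hij ((hexu σ (hΨ i σ hσi)).unique hσi hσj))]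
  refine Finset.sum_congr rfl fun i _ => ?_
  have hFiΨ := (hFfacet i).1
  obtain ⟨hcard, himg⟩ := hbal (F i) hFiΨ (hFfacet i).2
  have hinj : ∀ u ∈ F i, ∀ v ∈ F i, ρ u = ρ v → u = v := by
    intro u hu v hv h
    by_contra hne
    exact hproper u v (hSig (F i) hFiΨ.1 {u, v}
      (Finset.insert_subset hu (Finset.singleton_subset_iff.2 hv))) hne h
  rw [fund_eq_sum_mono _ n (fun x hx => by
    obtain ⟨v, _, rfl⟩ := Finset.mem_image.1 hx
    exact hρrange v)]
  refine Finset.sum_nbij' (i := fun σ => σ.image ρ)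
    (j := fun T => (F i).filter (fun v => ρ v ∈ T)) ?_ ?_ ?_ ?_ ?_
  · intro σ hσ
    rw [Finset.mem_Icc] at hσ
    rw [Finset.mem_filter, Finset.mem_powerset]
    exact ⟨himg ▸ Finset.image_subset_image hσ.2, Finset.image_subset_image hσ.1⟩
  · intro T hT
    rw [Finset.mem_filter, Finset.mem_powerset] at hT
    rw [Finset.mem_Icc]
    refine ⟨fun v hv => Finset.mem_filter.2 ⟨(hshelling i).1.2.1 hv,
      hT.2 (Finset.mem_image_of_mem ρ hv)⟩, Finset.filter_subset _ _⟩
  · intro σ hσ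
    rw [Finset.mem_Icc] at hσ
    ext v
    simp only [Finset.mem_filter]
    constructor
    · rintro ⟨hvF, hvT⟩
      obtain ⟨u, hu, huv⟩ := Finset.mem_image.1 hvT
      exact hinj u (hσ.2 hu) v hvF huv ▸ hu
    · intro hv
      exact ⟨hσ.2 hv, Finset.mem_image_of_mem ρ hv⟩
  · intro T hT
    rw [Finset.mem_filter, Finset.mem_powerset] at hT
    ext t
    simp only [Finset.mem_image, Finset.mem_filter]
    constructor
    · rintro ⟨v, ⟨_, hvT⟩, rfl⟩
      exact hvT
    · intro ht
      obtain ⟨v, hvF, rfl⟩ := Finset.mem_image.1 (himg ▸ hT.1 ht)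
      exact ⟨v, ⟨hvF, ht⟩, rfl⟩
  · intro σ _
    rfl
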